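/- arXiv:0712.1597 — 2 statements merged into one kernel-verified Lean document; each statement's English description precedes it below -/
import Mathlib

section
/- The modified universal enveloping algebra Ũ of the Euclidean algebra e(2) is isomorphic, as a nonunital associative ℂ-algebra, to the preprojective algebra P(Q_∞) of type A_∞. Concretely: let Ũ be the complex vector space with basis {(m, k, n) : m ∈ ℕ, k ∈ ℤ, n ∈ ℕ} (the basis element (m,k,n) representing p₊^m a_k p₋^n) with bilinear multiplication (m,k,n)·(m′,k′,n′) = (m+m′, k−m′, n+n′) if k − m′ = k′ − n, and = 0 otherwise; and let P(Q_∞) be the quotient of the free nonunital associative ℂ-algebra on generators {ε_i, h_i, h̄_i : i ∈ ℤ} by the two-sided ideal generated by the elements ε_i ε_j − δ_{ij} ε_i, h_i − ε_{i+1} h_i, h_i − h_i ε_i, h̄_i − ε_i h̄_i, h̄_i − h̄_i ε_{i+1}, and h̄_i h_i − h_{i−1} h̄_{i−1} for all i, j ∈ ℤ. Then the assignment ε_i ↦ (0, i, 0), h_i ↦ (1, i, 0), h̄_i ↦ (0, i, 1) induces an isomorphism of nonunital ℂ-algebras P(Q_∞) → Ũ. -/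
/-- Generators of the preprojective algebra `P(Q_∞)` of type `A_∞`: trivial paths
`eps i` (`i ∈ ℤ`), arrows `arr i : i → i+1` and reversed arrows `rev i : i+1 → i`. -/
inductive QGen : Type
  | eps (i : ℤ)
  | arr (i : ℤ)
  | rev (i : ℤ)

/-- The free nonunital associative `ℂ`-algebra on the generators, realized as the
semigroup algebra of the free semigroup on the generators. -/
abbrev FNA : Type := MonoidAlgebra ℂ (FreeSemigroup QGen)

/-- The generators, viewed as elements of the free nonunital algebra. -/
noncomputable def gen (x : QGen) : FNA := MonoidAlgebra.single (FreeSemigroup.of x) 1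

/-- The defining relations of `P(Q_∞)`: `εᵢεⱼ − δᵢⱼεᵢ`, `hᵢ − ε_{i+1}hᵢ`, `hᵢ − hᵢεᵢ`,
`h̄ᵢ − εᵢh̄ᵢ`, `h̄ᵢ − h̄ᵢε_{i+1}`, and the Gelfand–Ponomarev relations
`h̄ᵢhᵢ − h_{i-1}h̄_{i-1}`. -/
inductive IsRel : FNA → Prop
  | eps_mul (i j : ℤ) :
      IsRel (gen (.eps i) * gen (.eps j) - if i = j then gen (.eps i) else 0)
  | arr_left (i : ℤ) : IsRel (gen (.arr i) - gen (.eps (i + 1)) * gen (.arr i))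
  | arr_right (i : ℤ) : IsRel (gen (.arr i) - gen (.arr i) * gen (.eps i))
  | rev_left (i : ℤ) : IsRel (gen (.rev i) - gen (.eps i) * gen (.rev i))
  | rev_right (i : ℤ) : IsRel (gen (.rev i) - gen (.rev i) * gen (.eps (i + 1)))
  | gp (i : ℤ) :
      IsRel (gen (.rev i) * gen (.arr i) - gen (.arr (i - 1)) * gen (.rev (i - 1)))

/-- The two-sided ideal of the (nonunital) algebra `FNA` generated by the relations:
the linear span of the relations and all their left/right/two-sided multiples. -/
noncomputable def relIdeal : Submodule ℂ FNA :=
  Submodule.span ℂ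
    {z : FNA | ∃ s, IsRel s ∧
      (z = s ∨ (∃ x, z = x * s) ∨ (∃ y, z = s * y) ∨ ∃ x y, z = x * s * y)}

/-- The preprojective algebra `P(Q_∞)` as a `ℂ`-vector space: the quotient of the free
nonunital algebra by the two-sided ideal generated by the relations.  Its multiplication
is induced by that of `FNA`. -/
abbrev PQInf : Type := FNA ⧸ relIdeal

/-- The modified enveloping algebra `Ũ` of `e(2)`, with basis `(m, k, n) ↔ p₊ᵐ aₖ p₋ⁿ`. -/
abbrev UTilde : Type := (ℕ × ℤ × ℕ) →₀ ℂ

/-- The multiplication of `Ũ`: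
`(m,k,n)·(m′,k′,n′) = (m+m′, k−m′, n+n′)` if `k − m′ = k′ − n`, and `0` otherwise. -/
noncomputable def umul (f g : UTilde) : UTilde :=
  f.sum fun p c => g.sum fun q d =>
    if p.2.1 - (q.1 : ℤ) = q.2.1 - (p.2.2 : ℤ) then
      Finsupp.single (p.1 + q.1, p.2.1 - (q.1 : ℤ), p.2.2 + q.2.2) (c * d)
    else 0

namespace Aux

noncomputable def B (p : ℕ × ℤ × ℕ) : UTilde →ₗ[ℂ] UTilde :=
  Finsupp.lsum ℂ fun q =>
    if p.2.1 - (q.1 : ℤ) = q.2.1 - (p.2.2 : ℤ) then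
      Finsupp.lsingle (p.1 + q.1, p.2.1 - (q.1 : ℤ), p.2.2 + q.2.2)
    else 0

noncomputable def umulL : UTilde →ₗ[ℂ] UTilde →ₗ[ℂ] UTilde :=
  Finsupp.lsum ℂ fun p => LinearMap.toSpanSingleton ℂ _ (B p)

lemma umul_eq (f g : UTilde) : umul f g = umulL f g := by
  rw [umul, umulL]
  rw [Finsupp.lsum_apply, LinearMap.finsupp_sum_apply]
  refine Finsupp.sum_congr fun p _ => ?_
  rw [LinearMap.toSpanSingleton_apply, LinearMap.smul_apply, B, Finsupp.lsum_apply,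
    Finsupp.smul_sum]
  refine Finsupp.sum_congr fun q _ => ?_
  split_ifs with h
  · simp [Finsupp.smul_single]
  · simp
lemma umulL_single (p : ℕ × ℤ × ℕ) (c : ℂ) (g : UTilde) :
    umulL (Finsupp.single p c) g = c • B p g := by
  rw [umulL, Finsupp.lsum_single, LinearMap.toSpanSingleton_apply, LinearMap.smul_apply]

lemma B_single (p q : ℕ × ℤ × ℕ) (d : ℂ) :
    B p (Finsupp.single q d) =
      if p.2.1 - (q.1 : ℤ) = q.2.1 - (p.2.2 : ℤ) then
        Finsupp.single (p.1 + q.1, p.2.1 - (q.1 : ℤ), p.2.2 + q.2.2) d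
      else 0 := by
  rw [B, Finsupp.lsum_single]
  split_ifs with h <;> simp

lemma umul_single_single (p q : ℕ × ℤ × ℕ) (c d : ℂ) :
    umul (Finsupp.single p c) (Finsupp.single q d) =
      if p.2.1 - (q.1 : ℤ) = q.2.1 - (p.2.2 : ℤ) then
        Finsupp.single (p.1 + q.1, p.2.1 - (q.1 : ℤ), p.2.2 + q.2.2) (c * d)
      else 0 := by
  rw [umul_eq, umulL_single, B_single]
  split_ifs with h <;> simp [Finsupp.smul_single, mul_comm]

lemma zero_umul (g : UTilde) : umul 0 g = 0 := by
  rw [umul_eq]; simp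

lemma umul_zero (f : UTilde) : umul f 0 = 0 := by
  rw [umul_eq]; simp

lemma add_umul (f f' g : UTilde) : umul (f + f') g = umul f g + umul f' g := by
  rw [umul_eq, umul_eq, umul_eq]; simp

lemma umul_add (f g g' : UTilde) : umul f (g + g') = umul f g + umul f g' := by
  rw [umul_eq, umul_eq, umul_eq]; simp

lemma smul_umul (c : ℂ) (f g : UTilde) : umul (c • f) g = c • umul f g := by
  rw [umul_eq, umul_eq]; simp

lemma umul_smul (c : ℂ) (f g : UTilde) : umul f (c • g) = c • umul f g := by
  rw [umul_eq, umul_eq]; simp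

lemma umul_assoc (f g h : UTilde) : umul (umul f g) h = umul f (umul g h) := by
  induction f using Finsupp.induction_linear with
  | zero => simp [zero_umul]
  | add a b ha hb => simp [add_umul, ha, hb]
  | single p c =>
    induction g using Finsupp.induction_linear with
    | zero => simp [zero_umul, umul_zero]
    | add a b ha hb => simp [add_umul, umul_add, ha, hb]
    | single q d =>
      induction h using Finsupp.induction_linear with
      | zero => simp [umul_zero]
      | add a b ha hb => simp [umul_add, ha, hb]
      | single r e =>
        obtain ⟨m1, k1, n1⟩ := p
        obtain ⟨m2, k2, n2⟩ := q
        obtain ⟨m3, k3, n3⟩ := r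
        rw [umul_single_single (m1,k1,n1) (m2,k2,n2),
          umul_single_single (m2,k2,n2) (m3,k3,n3)]
        simp only
        by_cases h1 : k1 - (m2 : ℤ) = k2 - (n1 : ℤ) <;>
          by_cases h2 : k2 - (m3 : ℤ) = k3 - (n2 : ℤ)
        · rw [if_pos h1, if_pos h2, umul_single_single, umul_single_single]
          simp only
          rw [if_pos (show k1 - (m2:ℤ) - m3 = k3 - ((n1+n2 : ℕ) : ℤ) by push_cast; omega),
            if_pos (show k1 - ((m2+m3 : ℕ) : ℤ) = k2 - m3 - (n1 : ℤ) by push_cast; omega)]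
          have h3 : ((m1+m2)+m3, k1 - (m2:ℤ) - m3, (n1+n2)+n3)
              = (m1+(m2+m3), k1 - ((m2+m3 : ℕ) : ℤ), n1+(n2+n3)) := by
            simp [Prod.ext_iff]; push_cast; omega
          rw [h3, mul_assoc]
        · rw [if_pos h1, if_neg h2, umul_zero, umul_single_single]
          simp only
          rw [if_neg (show ¬ k1 - (m2:ℤ) - m3 = k3 - ((n1+n2 : ℕ) : ℤ) by push_cast; omega)]
        · rw [if_neg h1, if_pos h2, zero_umul, umul_single_single]
          simp only
          rw [if_neg (show ¬ k1 - ((m2+m3 : ℕ) : ℤ) = k2 - m3 - (n1 : ℤ) by push_cast; omega)]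
        · rw [if_neg h1, if_neg h2, zero_umul, umul_zero]

def USem : Type := UTilde

noncomputable instance : Mul USem := ⟨umul⟩

noncomputable instance : Semigroup USem := { mul_assoc := umul_assoc }

noncomputable def mu : QGen → UTilde
  | .eps i => Finsupp.single (0, i, 0) 1
  | .arr i => Finsupp.single (1, i, 0) 1
  | .rev i => Finsupp.single (0, i, 1) 1

noncomputable def EvS : FreeSemigroup QGen →ₙ* USem :=
  FreeSemigroup.lift (fun x => (mu x : USem))

noncomputable def Ev (w : FreeSemigroup QGen) : UTilde := EvS w

@[simp] lemma Ev_of (x : QGen) : Ev (FreeSemigroup.of x) = mu x := by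
  rfl

lemma Ev_mul (u v : FreeSemigroup QGen) : Ev (u * v) = umul (Ev u) (Ev v) :=
  map_mul EvS u v

noncomputable def Phi : FNA →ₗ[ℂ] UTilde :=
  (Finsupp.lsum ℂ fun w => LinearMap.toSpanSingleton ℂ UTilde (Ev w)) ∘ₗ
    (MonoidAlgebra.coeffLinearEquiv ℂ).toLinearMap

@[simp] lemma Phi_single (w : FreeSemigroup QGen) (c : ℂ) :
    Phi (MonoidAlgebra.single w c) = c • Ev w := by
  rw [Phi]
  exact Finsupp.lsum_single ℂ (fun w => LinearMap.toSpanSingleton ℂ UTilde (Ev w)) w c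

lemma Phi_mul (x y : FNA) : Phi (x * y) = umul (Phi x) (Phi y) := by
  induction x using MonoidAlgebra.induction_linear with
  | zero => simp [zero_umul, zero_mul]
  | add a b ha hb => simp [add_mul, ha, hb, add_umul]
  | single p c =>
    induction y using MonoidAlgebra.induction_linear with
    | zero => simp [umul_zero, mul_zero]
    | add a b ha hb => simp [mul_add, ha, hb, umul_add]
    | single q d =>
      rw [show (MonoidAlgebra.single p c : FNA) * MonoidAlgebra.single q d
          = MonoidAlgebra.single (p * q) (c * d) from MonoidAlgebra.single_mul_single _ _ _ _]
      simp only [Phi_single, Ev_mul, smul_umul, umul_smul]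
      rw [mul_smul, smul_comm]
def Wr : ℕ → ℤ → FreeSemigroup QGen
  | 0, k => .of (.eps k)
  | n+1, k => .of (.rev k) * Wr n (k+1)

def Wd : ℕ → ℤ → ℕ → FreeSemigroup QGen
  | 0, k, n => Wr n k
  | m+1, k, n => .of (.arr (k + (m : ℤ))) * Wd m k n

lemma Ev_Wr (n : ℕ) (k : ℤ) : Ev (Wr n k) = Finsupp.single (0, k, n) 1 := by
  induction n generalizing k with
  | zero => simp [Wr, mu]
  | succ n ih =>
    rw [Wr, Ev_mul, Ev_of, ih]
    show umul (Finsupp.single (0, k, 1) 1) _ = _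
    rw [umul_single_single]
    simp only
    rw [if_pos (by push_cast; omega)]
    rw [show ((0:ℕ) + 0, k - ((0:ℕ):ℤ), 1 + n) = ((0:ℕ), k, n + 1) by
      simp [Prod.ext_iff]; omega]
    norm_num

lemma Ev_Wd (m : ℕ) (k : ℤ) (n : ℕ) : Ev (Wd m k n) = Finsupp.single (m, k, n) 1 := by
  induction m with
  | zero => rw [Wd]; exact Ev_Wr n k
  | succ m ih =>
    rw [Wd, Ev_mul, Ev_of, ih]
    show umul (Finsupp.single (1, k + (m:ℤ), 0) 1) _ = _
    rw [umul_single_single]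
    simp only
    rw [if_pos (by push_cast; omega)]
    rw [show ((1:ℕ) + m, k + (m:ℤ) - (m:ℤ), 0 + n) = (m + 1, k, n) by
      simp [Prod.ext_iff]; omega]
    norm_num

lemma mem_mul_left (x : FNA) {z : FNA} (hz : z ∈ relIdeal) : x * z ∈ relIdeal := by
  induction hz using Submodule.span_induction with
  | mem z hzS =>
    obtain ⟨s, hs, hc⟩ := hzS
    apply Submodule.subset_span
    rcases hc with h | ⟨x', h⟩ | ⟨y, h⟩ | ⟨x', y, h⟩ <;> rw [h]
    · exact ⟨s, hs, Or.inr (Or.inl ⟨x, rfl⟩)⟩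
    · exact ⟨s, hs, Or.inr (Or.inl ⟨x * x', (mul_assoc x x' s).symm⟩)⟩
    · exact ⟨s, hs, Or.inr (Or.inr (Or.inr ⟨x, y, (mul_assoc x s y).symm⟩))⟩
    · exact ⟨s, hs, Or.inr (Or.inr (Or.inr ⟨x * x', y, by
        rw [← mul_assoc, ← mul_assoc]⟩))⟩
  | zero => simp
  | add a b _ _ ha hb => rw [mul_add]; exact add_mem ha hb
  | smul c a _ ha => rw [mul_smul_comm]; exact Submodule.smul_mem _ c ha

lemma mem_mul_right {z : FNA} (hz : z ∈ relIdeal) (y : FNA) : z * y ∈ relIdeal := by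
  induction hz using Submodule.span_induction with
  | mem z hzS =>
    obtain ⟨s, hs, hc⟩ := hzS
    apply Submodule.subset_span
    rcases hc with h | ⟨x', h⟩ | ⟨y', h⟩ | ⟨x', y', h⟩ <;> rw [h]
    · exact ⟨s, hs, Or.inr (Or.inr (Or.inl ⟨y, rfl⟩))⟩
    · exact ⟨s, hs, Or.inr (Or.inr (Or.inr ⟨x', y, rfl⟩))⟩
    · exact ⟨s, hs, Or.inr (Or.inr (Or.inl ⟨y' * y, mul_assoc s y' y⟩))⟩
    · exact ⟨s, hs, Or.inr (Or.inr (Or.inr ⟨x', y' * y, by rw [← mul_assoc]⟩))⟩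
  | zero => simp
  | add a b _ _ ha hb => rw [add_mul]; exact add_mem ha hb
  | smul c a _ ha => rw [smul_mul_assoc]; exact Submodule.smul_mem _ c ha

def Cg (a b : FNA) : Prop := a - b ∈ relIdeal

lemma Cg.refl (a : FNA) : Cg a a := by simp [Cg]

lemma Cg.symm {a b : FNA} (h : Cg a b) : Cg b a := by
  rw [Cg, ← neg_sub]; exact neg_mem h

lemma Cg.trans {a b c : FNA} (h1 : Cg a b) (h2 : Cg b c) : Cg a c := by
  have := add_mem h1 h2
  rwa [sub_add_sub_cancel] at this

lemma cg_of_eq {a b : FNA} (h : a = b) : Cg a b := h ▸ Cg.refl a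

lemma Cg.mull (x : FNA) {a b : FNA} (h : Cg a b) : Cg (x * a) (x * b) := by
  have := mem_mul_left x h
  rwa [mul_sub] at this

lemma Cg.mulr {a b : FNA} (h : Cg a b) (y : FNA) : Cg (a * y) (b * y) := by
  have := mem_mul_right h y
  rwa [sub_mul] at this

lemma cg_rel {a b : FNA} (h : IsRel (a - b)) : Cg a b :=
  Submodule.subset_span ⟨a - b, h, Or.inl rfl⟩

lemma cg_eps_eps (i j : ℤ) :
    Cg (gen (.eps i) * gen (.eps j)) (if i = j then gen (.eps i) else 0) :=
  cg_rel (IsRel.eps_mul i j)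

lemma cg_arr_left (i : ℤ) : Cg (gen (.arr i)) (gen (.eps (i + 1)) * gen (.arr i)) :=
  cg_rel (IsRel.arr_left i)

lemma cg_arr_right (i : ℤ) : Cg (gen (.arr i)) (gen (.arr i) * gen (.eps i)) :=
  cg_rel (IsRel.arr_right i)

lemma cg_rev_left (i : ℤ) : Cg (gen (.rev i)) (gen (.eps i) * gen (.rev i)) :=
  cg_rel (IsRel.rev_left i)

lemma cg_rev_right (i : ℤ) : Cg (gen (.rev i)) (gen (.rev i) * gen (.eps (i + 1))) :=
  cg_rel (IsRel.rev_right i)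

lemma cg_gp (i : ℤ) :
    Cg (gen (.rev i) * gen (.arr i)) (gen (.arr (i - 1)) * gen (.rev (i - 1))) :=
  cg_rel (IsRel.gp i)

lemma single_of_mul (g : QGen) (w : FreeSemigroup QGen) :
    (MonoidAlgebra.single (FreeSemigroup.of g * w) 1 : FNA)
      = gen g * MonoidAlgebra.single w 1 := by
  rw [gen, MonoidAlgebra.single_mul_single, one_mul]

lemma cg_eps_arr (i j : ℤ) :
    Cg (gen (.eps i) * gen (.arr j)) (if i = j + 1 then gen (.arr j) else 0) := by
  have h1 := (cg_arr_left j).mull (gen (.eps i))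
  have h2 : gen (.eps i) * (gen (.eps (j + 1)) * gen (.arr j))
      = gen (.eps i) * gen (.eps (j + 1)) * gen (.arr j) := (mul_assoc _ _ _).symm
  have h3 := (cg_eps_eps i (j + 1)).mulr (gen (.arr j))
  refine (h1.trans ((cg_of_eq h2).trans h3)).trans ?_
  by_cases hij : i = j + 1
  · rw [if_pos hij, if_pos hij, hij]
    exact (cg_arr_left j).symm
  · rw [if_neg hij, if_neg hij, zero_mul]
    exact Cg.refl 0

lemma cg_eps_rev (i j : ℤ) :
    Cg (gen (.eps i) * gen (.rev j)) (if i = j then gen (.rev j) else 0) := by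
  have h1 := (cg_rev_left j).mull (gen (.eps i))
  have h2 : gen (.eps i) * (gen (.eps j) * gen (.rev j))
      = gen (.eps i) * gen (.eps j) * gen (.rev j) := (mul_assoc _ _ _).symm
  have h3 := (cg_eps_eps i j).mulr (gen (.rev j))
  refine (h1.trans ((cg_of_eq h2).trans h3)).trans ?_
  by_cases hij : i = j
  · rw [if_pos hij, if_pos hij, hij]
    exact (cg_rev_left j).symm
  · rw [if_neg hij, if_neg hij, zero_mul]
    exact Cg.refl 0

lemma cg_head {i t : ℤ} {g : QGen}
    (hg : Cg (gen (.eps i) * gen g) (if i = t then gen g else 0))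
    (w : FreeSemigroup QGen) :
    Cg (gen (.eps i) * MonoidAlgebra.single (FreeSemigroup.of g * w) 1)
      (if i = t then MonoidAlgebra.single (FreeSemigroup.of g * w) 1 else 0) := by
  rw [single_of_mul, ← mul_assoc]
  refine (hg.mulr (MonoidAlgebra.single w 1)).trans ?_
  by_cases hit : i = t
  · rw [if_pos hit, if_pos hit]; exact Cg.refl _
  · rw [if_neg hit, if_neg hit, zero_mul]; exact Cg.refl 0

lemma cg_eps_Wd (i : ℤ) (m : ℕ) (k : ℤ) (n : ℕ) :
    Cg (gen (.eps i) * MonoidAlgebra.single (Wd m k n) 1)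
      (if i = k + m then MonoidAlgebra.single (Wd m k n) 1 else 0) := by
  match m, n with
  | Nat.succ m, n =>
    rw [Wd]
    have := cg_head (g := .arr (k + (m : ℤ))) (t := k + (m : ℤ) + 1)
      (cg_eps_arr i (k + (m : ℤ))) (Wd m k n)
    rw [show k + ((Nat.succ m : ℕ) : ℤ) = k + (m : ℤ) + 1 by push_cast; ring]
    exact this
  | 0, Nat.succ n =>
    rw [Wd, Wr]
    have := cg_head (g := .rev k) (t := k) (cg_eps_rev i k) (Wr n (k + 1))
    rw [show k + ((0 : ℕ) : ℤ) = k by push_cast; ring]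
    exact this
  | 0, 0 =>
    rw [Wd, Wr]
    rw [show (MonoidAlgebra.single (FreeSemigroup.of (QGen.eps k)) 1 : FNA) = gen (.eps k)
      from rfl]
    refine (cg_eps_eps i k).trans ?_
    rw [show k + ((0 : ℕ) : ℤ) = k by push_cast; ring]
    by_cases hik : i = k
    · rw [if_pos hik, if_pos hik, hik]; exact Cg.refl _
    · rw [if_neg hik, if_neg hik]; exact Cg.refl 0

lemma arr_Wd_eq (m : ℕ) (k : ℤ) (n : ℕ) :
    gen (.arr (k + (m : ℤ))) * MonoidAlgebra.single (Wd m k n) 1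
      = MonoidAlgebra.single (Wd (m + 1) k n) 1 := by
  rw [Wd, single_of_mul]

lemma cg_arr_Wd_ne (i : ℤ) (m : ℕ) (k : ℤ) (n : ℕ) (h : i ≠ k + m) :
    Cg (gen (.arr i) * MonoidAlgebra.single (Wd m k n) 1) 0 := by
  have h1 := (cg_arr_right i).mulr (MonoidAlgebra.single (Wd m k n) 1)
  have h2 : gen (.arr i) * gen (.eps i) * MonoidAlgebra.single (Wd m k n) 1
      = gen (.arr i) * (gen (.eps i) * MonoidAlgebra.single (Wd m k n) 1) := mul_assoc _ _ _
  have h3 := (cg_eps_Wd i m k n).mull (gen (.arr i))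
  rw [if_neg h, mul_zero] at h3
  exact (h1.trans ((cg_of_eq h2).trans h3))

lemma cg_rev_Wd_ne (i : ℤ) (m : ℕ) (k : ℤ) (n : ℕ) (h : i ≠ k + m - 1) :
    Cg (gen (.rev i) * MonoidAlgebra.single (Wd m k n) 1) 0 := by
  have h1 := (cg_rev_right i).mulr (MonoidAlgebra.single (Wd m k n) 1)
  have h2 : gen (.rev i) * gen (.eps (i + 1)) * MonoidAlgebra.single (Wd m k n) 1
      = gen (.rev i) * (gen (.eps (i + 1)) * MonoidAlgebra.single (Wd m k n) 1) :=
    mul_assoc _ _ _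
  have h3 := (cg_eps_Wd (i + 1) m k n).mull (gen (.rev i))
  rw [if_neg (by omega), mul_zero] at h3
  exact (h1.trans ((cg_of_eq h2).trans h3))

lemma cg_rev_Wd (m : ℕ) (k : ℤ) (n : ℕ) :
    Cg (gen (.rev (k + (m : ℤ) - 1)) * MonoidAlgebra.single (Wd m k n) 1)
      (MonoidAlgebra.single (Wd m (k - 1) (n + 1)) 1) := by
  induction m generalizing k with
  | zero =>
    apply cg_of_eq
    rw [Wd, Wd, Wr, show k - 1 + 1 = k by ring, ← single_of_mul]
    norm_num
  | succ m ih =>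
    rw [show k + ((Nat.succ m : ℕ) : ℤ) - 1 = k + (m : ℤ) by push_cast; ring, Wd,
      single_of_mul, ← mul_assoc]
    have h1 := (cg_gp (k + (m : ℤ))).mulr (MonoidAlgebra.single (Wd m k n) 1)
    have h2 : gen (.arr (k + (m : ℤ) - 1)) * gen (.rev (k + (m : ℤ) - 1))
          * MonoidAlgebra.single (Wd m k n) 1
        = gen (.arr (k + (m : ℤ) - 1))
          * (gen (.rev (k + (m : ℤ) - 1)) * MonoidAlgebra.single (Wd m k n) 1) :=
      mul_assoc _ _ _
    have h3 := (ih k).mull (gen (.arr (k + (m : ℤ) - 1)))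
    refine (h1.trans ((cg_of_eq h2).trans h3)).trans (cg_of_eq ?_)
    rw [show k + (m : ℤ) - 1 = (k - 1) + (m : ℤ) by ring, arr_Wd_eq]

lemma Ev_cases (w : FreeSemigroup QGen) :
    Ev w = 0 ∨ ∃ p, Ev w = Finsupp.single p 1 := by
  induction w using FreeSemigroup.recOnMul with
  | ih1 g =>
    right
    cases g with
    | eps i => exact ⟨(0, i, 0), Ev_of _⟩
    | arr i => exact ⟨(1, i, 0), Ev_of _⟩
    | rev i => exact ⟨(0, i, 1), Ev_of _⟩
  | ih2 g w _ ihw =>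
    rw [Ev_mul, Ev_of]
    rcases ihw with h | ⟨p, h⟩
    · left; rw [h, umul_zero]
    · rw [h]
      have hmu : ∃ q, mu g = Finsupp.single q 1 := by
        cases g with
        | eps i => exact ⟨(0, i, 0), rfl⟩
        | arr i => exact ⟨(1, i, 0), rfl⟩
        | rev i => exact ⟨(0, i, 1), rfl⟩
      obtain ⟨q, hq⟩ := hmu
      rw [hq, umul_single_single]
      split_ifs
      · right; exact ⟨_, by rw [one_mul]⟩
      · left; rfl

noncomputable def Nmap : UTilde →ₗ[ℂ] FNA :=
  Finsupp.lsum ℂ fun p =>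
    LinearMap.toSpanSingleton ℂ FNA (MonoidAlgebra.single (Wd p.1 p.2.1 p.2.2) 1)

@[simp] lemma Nmap_single (p : ℕ × ℤ × ℕ) (c : ℂ) :
    Nmap (Finsupp.single p c) = c • MonoidAlgebra.single (Wd p.1 p.2.1 p.2.2) 1 := by
  rw [Nmap]
  exact Finsupp.lsum_single _ _ _ _

lemma cg_main (w : FreeSemigroup QGen) :
    Cg (MonoidAlgebra.single w 1) (Nmap (Ev w)) := by
  induction w using FreeSemigroup.recOnMul with
  | ih1 g =>
    cases g with
    | eps i =>
      rw [Ev_of, show mu (.eps i) = Finsupp.single ((0 : ℕ), i, (0 : ℕ)) 1 from rfl,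
        Nmap_single, one_smul]
      exact cg_of_eq (by rw [Wd, Wr])
    | arr i =>
      rw [Ev_of, show mu (.arr i) = Finsupp.single ((1 : ℕ), i, (0 : ℕ)) 1 from rfl,
        Nmap_single, one_smul]
      have : (MonoidAlgebra.single (Wd 1 i 0) 1 : FNA) = gen (.arr i) * gen (.eps i) := by
        have e1 : Wd 1 i 0
            = FreeSemigroup.of (QGen.arr (i + 0)) * FreeSemigroup.of (QGen.eps i) := rfl
        rw [e1, add_zero, single_of_mul]
        rfl
      rw [this]
      exact cg_arr_right i
    | rev i =>
      rw [Ev_of, show mu (.rev i) = Finsupp.single ((0 : ℕ), i, (1 : ℕ)) 1 from rfl,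
        Nmap_single, one_smul]
      have : (MonoidAlgebra.single (Wd 0 i 1) 1 : FNA) = gen (.rev i) * gen (.eps (i + 1)) := by
        have e1 : Wd 0 i 1
            = FreeSemigroup.of (QGen.rev i) * FreeSemigroup.of (QGen.eps (i + 1)) := rfl
        rw [e1, single_of_mul]
        rfl
      rw [this]
      exact cg_rev_right i
  | ih2 g w _ ihw =>
    rw [single_of_mul, Ev_mul, Ev_of]
    have h1 := ihw.mull (gen g)
    rcases Ev_cases w with h | ⟨p, h⟩
    · rw [h, map_zero, mul_zero] at h1
      rw [h, umul_zero, map_zero]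
      exact h1
    · obtain ⟨m, k, n⟩ := p
      rw [h]
      cases g with
      | eps i =>
        rw [show mu (.eps i) = Finsupp.single ((0 : ℕ), i, (0 : ℕ)) 1 from rfl,
          umul_single_single]
        simp only
        rw [h, Nmap_single, one_smul] at h1
        simp only at h1
        by_cases hi : i = k + m
        · rw [if_pos (show i - ((m : ℕ) : ℤ) = k - (((0 : ℕ) : ℕ) : ℤ) by push_cast; omega)]
          rw [show ((0 : ℕ) + m, i - ((m : ℕ) : ℤ), (0 : ℕ) + n) = (m, k, n) by
            simp [Prod.ext_iff]; omega]
          rw [one_mul, Nmap_single, one_smul]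
          simp only
          have h2 := cg_eps_Wd i m k n
          rw [if_pos hi] at h2
          exact h1.trans h2
        · rw [if_neg (by push_cast; omega), map_zero]
          have h2 := cg_eps_Wd i m k n
          rw [if_neg hi] at h2
          exact h1.trans h2
      | arr i =>
        rw [show mu (.arr i) = Finsupp.single ((1 : ℕ), i, (0 : ℕ)) 1 from rfl,
          umul_single_single]
        simp only
        rw [h, Nmap_single, one_smul] at h1
        simp only at h1
        by_cases hi : i = k + m
        · rw [if_pos (by push_cast; omega)]
          rw [show ((1 : ℕ) + m, i - ((m : ℕ) : ℤ), (0 : ℕ) + n) = (m + 1, k, n) by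
            simp [Prod.ext_iff]; omega]
          rw [one_mul, Nmap_single, one_smul]
          simp only
          refine h1.trans (cg_of_eq ?_)
          rw [← arr_Wd_eq m k n, hi]
        · rw [if_neg (by push_cast; omega), map_zero]
          exact h1.trans (cg_arr_Wd_ne i m k n hi)
      | rev i =>
        rw [show mu (.rev i) = Finsupp.single ((0 : ℕ), i, (1 : ℕ)) 1 from rfl,
          umul_single_single]
        simp only
        rw [h, Nmap_single, one_smul] at h1
        simp only at h1
        by_cases hi : i = k + m - 1
        · rw [if_pos (by push_cast; omega)]
          rw [show ((0 : ℕ) + m, i - ((m : ℕ) : ℤ), (1 : ℕ) + n) = (m, k - 1, n + 1) by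
            simp [Prod.ext_iff]; omega]
          rw [one_mul, Nmap_single, one_smul]
          simp only
          refine h1.trans ?_
          have h2 := cg_rev_Wd m k n
          rw [show k + (m : ℤ) - 1 = i by omega] at h2
          exact h2
        · rw [if_neg (by push_cast; omega), map_zero]
          exact h1.trans (cg_rev_Wd_ne i m k n hi)

@[simp] lemma Phi_gen (x : QGen) : Phi (gen x) = mu x := by
  rw [gen, Phi_single, one_smul, ← Ev_of x]

lemma Phi_gen_mul (a b : QGen) : Phi (gen a * gen b) = umul (mu a) (mu b) := by
  rw [Phi_mul, Phi_gen, Phi_gen]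

lemma Phi_rel {s : FNA} (h : IsRel s) : Phi s = 0 := by
  cases h with
  | eps_mul i j =>
    rw [map_sub, Phi_gen_mul, sub_eq_zero, apply_ite Phi, Phi_gen, map_zero,
      show mu (.eps i) = Finsupp.single ((0 : ℕ), i, (0 : ℕ)) 1 from rfl,
      show mu (.eps j) = Finsupp.single ((0 : ℕ), j, (0 : ℕ)) 1 from rfl,
      umul_single_single]
    simp only
    by_cases hij : i = j
    · rw [if_pos (show i - (((0 : ℕ) : ℕ) : ℤ) = j - (((0 : ℕ) : ℕ) : ℤ) by rw [hij]),
        if_pos hij, hij]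
      norm_num
    · rw [if_neg (show ¬ i - (((0 : ℕ) : ℕ) : ℤ) = j - (((0 : ℕ) : ℕ) : ℤ) by
        push_cast; omega), if_neg hij]
  | arr_left i =>
    rw [map_sub, Phi_gen_mul, Phi_gen, sub_eq_zero,
      show mu (.eps (i + 1)) = Finsupp.single ((0 : ℕ), i + 1, (0 : ℕ)) 1 from rfl,
      show mu (.arr i) = Finsupp.single ((1 : ℕ), i, (0 : ℕ)) 1 from rfl,
      umul_single_single]
    simp only
    rw [if_pos (show i + 1 - ((1 : ℕ) : ℤ) = i - ((0 : ℕ) : ℤ) by push_cast; ring)]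
    norm_num
  | arr_right i =>
    rw [map_sub, Phi_gen_mul, Phi_gen, sub_eq_zero,
      show mu (.arr i) = Finsupp.single ((1 : ℕ), i, (0 : ℕ)) 1 from rfl,
      show mu (.eps i) = Finsupp.single ((0 : ℕ), i, (0 : ℕ)) 1 from rfl,
      umul_single_single]
    simp only
    norm_num
  | rev_left i =>
    rw [map_sub, Phi_gen_mul, Phi_gen, sub_eq_zero,
      show mu (.eps i) = Finsupp.single ((0 : ℕ), i, (0 : ℕ)) 1 from rfl,
      show mu (.rev i) = Finsupp.single ((0 : ℕ), i, (1 : ℕ)) 1 from rfl,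
      umul_single_single]
    simp only
    norm_num
  | rev_right i =>
    rw [map_sub, Phi_gen_mul, Phi_gen, sub_eq_zero,
      show mu (.rev i) = Finsupp.single ((0 : ℕ), i, (1 : ℕ)) 1 from rfl,
      show mu (.eps (i + 1)) = Finsupp.single ((0 : ℕ), i + 1, (0 : ℕ)) 1 from rfl,
      umul_single_single]
    simp only
    rw [if_pos (show i - ((0 : ℕ) : ℤ) = i + 1 - ((1 : ℕ) : ℤ) by push_cast; ring)]
    norm_num
  | gp i =>
    rw [map_sub, Phi_gen_mul, Phi_gen_mul, sub_eq_zero,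
      show mu (.rev i) = Finsupp.single ((0 : ℕ), i, (1 : ℕ)) 1 from rfl,
      show mu (.arr i) = Finsupp.single ((1 : ℕ), i, (0 : ℕ)) 1 from rfl,
      show mu (.arr (i - 1)) = Finsupp.single ((1 : ℕ), i - 1, (0 : ℕ)) 1 from rfl,
      show mu (.rev (i - 1)) = Finsupp.single ((0 : ℕ), i - 1, (1 : ℕ)) 1 from rfl,
      umul_single_single, umul_single_single]
    simp only
    norm_num

lemma relIdeal_le_ker : relIdeal ≤ LinearMap.ker Phi := by
  rw [relIdeal, Submodule.span_le]
  rintro z ⟨s, hs, hz⟩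
  simp only [SetLike.mem_coe, LinearMap.mem_ker]
  rcases hz with rfl | ⟨x, rfl⟩ | ⟨y, rfl⟩ | ⟨x, y, rfl⟩
  · exact Phi_rel hs
  · rw [Phi_mul, Phi_rel hs, umul_zero]
  · rw [Phi_mul, Phi_rel hs, zero_umul]
  · rw [Phi_mul, Phi_mul, Phi_rel hs, umul_zero, zero_umul]

noncomputable def PhiBar : PQInf →ₗ[ℂ] UTilde := relIdeal.liftQ Phi relIdeal_le_ker

@[simp] lemma PhiBar_mk (x : FNA) :
    PhiBar (Submodule.Quotient.mk x) = Phi x := rfl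

noncomputable def Psi : UTilde →ₗ[ℂ] PQInf := relIdeal.mkQ.comp Nmap

lemma eq1 : PhiBar.comp Psi = LinearMap.id := by
  apply Finsupp.lhom_ext
  intro p c
  obtain ⟨m, k, n⟩ := p
  rw [LinearMap.comp_apply, Psi, LinearMap.comp_apply, Nmap_single, map_smul, map_smul,
    LinearMap.id_apply]
  rw [show relIdeal.mkQ (MonoidAlgebra.single (Wd (m, k, n).1 (m, k, n).2.1 (m, k, n).2.2) 1)
      = Submodule.Quotient.mk (MonoidAlgebra.single (Wd m k n) 1) from rfl]
  rw [PhiBar_mk, Phi_single, one_smul, Ev_Wd, Finsupp.smul_single, smul_eq_mul, mul_one]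

lemma mk_eq_of_cg {a b : FNA} (h : Cg a b) :
    (Submodule.Quotient.mk a : PQInf) = Submodule.Quotient.mk b :=
  (Submodule.Quotient.eq relIdeal).2 h

lemma eq2 : Psi.comp PhiBar = LinearMap.id := by
  apply Submodule.linearMap_qext
  apply MonoidAlgebra.lhom_ext'
  intro w
  apply LinearMap.ext
  intro c
  show Psi (Phi (MonoidAlgebra.single w c)) = Submodule.Quotient.mk (MonoidAlgebra.single w c)
  rw [show Phi (MonoidAlgebra.single w c) = c • Ev w from Phi_single w c, map_smul,
    show Psi (Ev w) = Submodule.Quotient.mk (Nmap (Ev w)) from rfl,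
    ← mk_eq_of_cg (cg_main w), ← Submodule.Quotient.mk_smul, MonoidAlgebra.smul_single,
    smul_eq_mul, mul_one]

end Aux

/-- The assignment `εᵢ ↦ aᵢ = (0,i,0)`, `hᵢ ↦ p₊aᵢ = (1,i,0)`, `h̄ᵢ ↦ aᵢp₋ = (0,i,1)`
induces an isomorphism of nonunital `ℂ`-algebras `P(Q_∞) ≅ Ũ`: a `ℂ`-linear bijection
from the quotient which intertwines the multiplications. -/
theorem stmt_11 :
    ∃ e : PQInf ≃ₗ[ℂ] UTilde,
      (∀ x y : FNA,
        e (Submodule.Quotient.mk (x * y)) =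
          umul (e (Submodule.Quotient.mk x)) (e (Submodule.Quotient.mk y))) ∧
      (∀ i : ℤ, e (Submodule.Quotient.mk (gen (.eps i))) = Finsupp.single (0, i, 0) 1) ∧
      (∀ i : ℤ, e (Submodule.Quotient.mk (gen (.arr i))) = Finsupp.single (1, i, 0) 1) ∧
      (∀ i : ℤ, e (Submodule.Quotient.mk (gen (.rev i))) = Finsupp.single (0, i, 1) 1) := by
  classical
  refine ⟨LinearEquiv.ofLinear Aux.PhiBar Aux.Psi Aux.eq1 Aux.eq2, ?_, ?_, ?_, ?_⟩
  · intro x y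
    rw [LinearEquiv.ofLinear_apply, LinearEquiv.ofLinear_apply, LinearEquiv.ofLinear_apply,
      Aux.PhiBar_mk, Aux.PhiBar_mk, Aux.PhiBar_mk, Aux.Phi_mul]
  · intro i
    rw [LinearEquiv.ofLinear_apply, Aux.PhiBar_mk, Aux.Phi_gen]
    rfl
  · intro i
    rw [LinearEquiv.ofLinear_apply, Aux.PhiBar_mk, Aux.Phi_gen]
    rfl
  · intro i
    rw [LinearEquiv.ofLinear_apply, Aux.PhiBar_mk, Aux.Phi_gen]
    rfl
end

section
/- Fix finitely supported functions v, w : ℤ → ℕ, and let (x, y, s) be a stable tuple: x_k : ℂ^{v_k} → ℂ^{v_{k+1}}, y_k : ℂ^{v_{k+1}} → ℂ^{v_k}, s_k : ℂ^{w_k} → ℂ^{v_k} are linear maps such that the only family of subspaces S_k ⊆ ℂ^{v_k} with x_k(S_k) ⊆ S_{k+1}, y_k(S_{k+1}) ⊆ S_k and im s_k ⊆ S_k for all k is S_k = ℂ^{v_k} for all k. If g = (g_k)_{k∈ℤ} with g_k ∈ GL(v_k, ℂ) satisfies g_{k+1} ∘ x_k = x_k ∘ g_k, g_k ∘ y_k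 = y_k ∘ g_{k+1} and g_k ∘ s_k = s_k for all k ∈ ℤ, then g_k is the identity for all k. That is, the stabilizer in G_v = ∏_k GL(v_k, ℂ) of a stable point is trivial. -/
/-- The stabilizer in `G_v = ∏ₖ GL(vₖ, ℂ)` of a stable point of the type `A_∞` Nakajima
quiver variety data is trivial: if `(x, y, s)` is stable (no proper graded subspace is
invariant under all `xₖ, yₖ` and contains all the images of the `sₖ`) and `g` commutes
with `x` and `y` and fixes `s`, then `g` is the identity. -/
theorem stmt_14 (v w : ℤ →₀ ℕ)
    (x : ∀ k : ℤ, (Fin (v k) → ℂ) →ₗ[ℂ] (Fin (v (k + 1)) → ℂ))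
    (y : ∀ k : ℤ, (Fin (v (k + 1)) → ℂ) →ₗ[ℂ] (Fin (v k) → ℂ))
    (s : ∀ k : ℤ, (Fin (w k) → ℂ) →ₗ[ℂ] (Fin (v k) → ℂ))
    (stable : ∀ S : ∀ k : ℤ, Submodule ℂ (Fin (v k) → ℂ),
      (∀ k, (S k).map (x k) ≤ S (k + 1)) →
      (∀ k, (S (k + 1)).map (y k) ≤ S k) →
      (∀ k, LinearMap.range (s k) ≤ S k) →
      ∀ k, S k = ⊤)
    (g : ∀ k : ℤ, (Fin (v k) → ℂ) ≃ₗ[ℂ] (Fin (v k) → ℂ))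
    (hgx : ∀ k : ℤ, ∀ u, g (k + 1) (x k u) = x k (g k u))
    (hgy : ∀ k : ℤ, ∀ u, g k (y k u) = y k (g (k + 1) u))
    (hgs : ∀ k : ℤ, ∀ u, g k (s k u) = s k u) :
    ∀ k : ℤ, g k = LinearEquiv.refl ℂ (Fin (v k) → ℂ) := by
  -- Consider the fixed-point subspaces of g.
  set S : ∀ k : ℤ, Submodule ℂ (Fin (v k) → ℂ) :=
    fun k => LinearMap.ker ((g k : (Fin (v k) → ℂ) →ₗ[ℂ] (Fin (v k) → ℂ)) - LinearMap.id)
    with hS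
  have memS : ∀ k u, u ∈ S k ↔ g k u = u := by
    intro k u
    simp [hS, LinearMap.mem_ker, sub_eq_zero]
  have hSx : ∀ k, (S k).map (x k) ≤ S (k + 1) := by
    intro k u hu
    rcases hu with ⟨a, ha, rfl⟩
    rw [memS]
    rw [hgx k a, (memS k a).mp ha]
  have hSy : ∀ k, (S (k + 1)).map (y k) ≤ S k := by
    intro k u hu
    rcases hu with ⟨a, ha, rfl⟩
    rw [memS]
    rw [hgy k a, (memS (k+1) a).mp ha]
  have hSs : ∀ k, LinearMap.range (s k) ≤ S k := by
    intro k u hu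
    rcases hu with ⟨a, rfl⟩
    rw [memS]
    exact hgs k a
  have htop := stable S hSx hSy hSs
  intro k
  ext u
  have : u ∈ S k := (htop k).symm ▸ Submodule.mem_top
  exact congrFun ((memS k u).mp this) _
end
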